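/- For every natural number k, (4/π) · ∫₀^{π/2} (4·cos²θ − 1)^k · sin²θ dθ = Σ_{i=0}^{k} (−1)^{k−i} · binom(k, i) · Cᵢ, where Cᵢ denotes the i-th Catalan number. -/

import Mathlib

open Real intervalIntegral

lemma wallis_cos_even (n : ℕ) :
    (∫ θ in (0:ℝ)..(Real.pi / 2), Real.cos θ ^ (2 * n))
      = Real.pi / 2 * (Nat.centralBinom n : ℝ) / 4 ^ n := by
  induction n with
  | zero => simp [Nat.centralBinom]
  | succ m ih =>
    have h := integral_cos_pow (a := (0:ℝ)) (b := Real.pi / 2) (2 * m)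
    have h2 : 2 * (m + 1) = 2 * m + 2 := by ring
    rw [h2, h, ih]
    have hcb : ((m : ℝ) + 1) * (Nat.centralBinom (m + 1) : ℝ)
        = 2 * (2 * m + 1) * (Nat.centralBinom m : ℝ) := by
      exact_mod_cast congrArg (Nat.cast : ℕ → ℝ) (Nat.succ_mul_centralBinom_succ m)
    simp only [Real.cos_pi_div_two, Real.sin_zero, Real.cos_zero, Real.sin_pi_div_two]
    have h4 : (4:ℝ) ^ (m + 1) = 4 * 4 ^ m := by ring
    rw [h4]
    have hm1 : ((m:ℝ) + 1) ≠ 0 := by positivity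
    have h4m : (4:ℝ) ^ m ≠ 0 := by positivity
    rw [zero_pow (by omega), one_pow, mul_one]
    push_cast
    field_simp
    linear_combination (-2*Real.pi) * hcb

lemma key_catalan (i : ℕ) :
    4 / Real.pi * ∫ θ in (0:ℝ)..(Real.pi / 2),
        (4 * Real.cos θ ^ 2) ^ i * Real.sin θ ^ 2 = (catalan i : ℝ) := by
  have hint : (∫ θ in (0:ℝ)..(Real.pi / 2), (4 * Real.cos θ ^ 2) ^ i * Real.sin θ ^ 2)
      = 4 ^ i * ((∫ θ in (0:ℝ)..(Real.pi / 2), Real.cos θ ^ (2 * i))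
          - ∫ θ in (0:ℝ)..(Real.pi / 2), Real.cos θ ^ (2 * (i+1))) := by
    rw [← intervalIntegral.integral_sub (by apply Continuous.intervalIntegrable; fun_prop)
          (by apply Continuous.intervalIntegrable; fun_prop),
        ← intervalIntegral.integral_const_mul]
    congr 1
    ext θ
    have hs : Real.sin θ ^ 2 = 1 - Real.cos θ ^ 2 := (Real.sin_sq θ)
    rw [hs]
    ring
  rw [hint, wallis_cos_even, wallis_cos_even]
  have hcb : ((i : ℝ) + 1) * (Nat.centralBinom (i + 1) : ℝ)
      = 2 * (2 * i + 1) * (Nat.centralBinom i : ℝ) := by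
    exact_mod_cast congrArg (Nat.cast : ℕ → ℝ) (Nat.succ_mul_centralBinom_succ i)
  have hcat : ((i : ℝ) + 1) * (catalan i : ℝ) = (Nat.centralBinom i : ℝ) := by
    exact_mod_cast congrArg (Nat.cast : ℕ → ℝ) (succ_mul_catalan_eq_centralBinom i)
  have hpi : Real.pi ≠ 0 := Real.pi_ne_zero
  have h4 : (4:ℝ) ^ (i + 1) = 4 * 4 ^ i := by ring
  rw [h4]
  have h4m : (4:ℝ) ^ i ≠ 0 := by positivity
  have hm1 : ((i:ℝ) + 1) ≠ 0 := by positivity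
  have hcbi1 : (Nat.centralBinom (i+1) : ℝ) = 2*(2*i+1)*(catalan i : ℝ) := by
    have h2 : ((i:ℝ)+1) * (Nat.centralBinom (i+1) : ℝ)
        = ((i:ℝ)+1) * (2*(2*i+1)*(catalan i : ℝ)) := by
      linear_combination hcb - 2*(2*(i:ℝ)+1)*hcat
    exact mul_left_cancel₀ hm1 h2
  rw [hcbi1]
  field_simp
  linear_combination (-4:ℝ) * hcat

/-- For every natural number `k`,
`(4/π) ∫₀^{π/2} (4 cos²θ - 1)^k sin²θ dθ = Σ_{i=0}^k (-1)^(k-i) (k choose i) Cᵢ`,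
where `Cᵢ` is the `i`-th Catalan number. -/
theorem integral_weyl_eq_alternating_sum_catalan (k : ℕ) :
    4 / Real.pi *
        ∫ θ in (0:ℝ)..(Real.pi / 2),
          (4 * Real.cos θ ^ 2 - 1) ^ k * Real.sin θ ^ 2
      = ∑ i ∈ Finset.range (k + 1),
          (-1 : ℝ) ^ (k - i) * (k.choose i : ℝ) * (catalan i : ℝ) := by
  have hexp : ∀ θ : ℝ, (4 * Real.cos θ ^ 2 - 1) ^ k * Real.sin θ ^ 2
      = ∑ i ∈ Finset.range (k + 1),
          (-1 : ℝ) ^ (k - i) * (k.choose i : ℝ)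
            * ((4 * Real.cos θ ^ 2) ^ i * Real.sin θ ^ 2) := by
    intro θ
    have := add_pow (4 * Real.cos θ ^ 2) (-1 : ℝ) k
    rw [show (4 * Real.cos θ ^ 2 - 1) = (4 * Real.cos θ ^ 2 + (-1)) by ring, this,
      Finset.sum_mul]
    refine Finset.sum_congr rfl fun i _ => ?_
    ring
  have hswap : (∫ θ in (0:ℝ)..(Real.pi / 2), (4 * Real.cos θ ^ 2 - 1) ^ k * Real.sin θ ^ 2)
      = ∑ i ∈ Finset.range (k + 1),
          (-1 : ℝ) ^ (k - i) * (k.choose i : ℝ)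
            * ∫ θ in (0:ℝ)..(Real.pi / 2), (4 * Real.cos θ ^ 2) ^ i * Real.sin θ ^ 2 := by
    simp_rw [hexp]
    rw [intervalIntegral.integral_finset_sum]
    · exact Finset.sum_congr rfl fun i _ => intervalIntegral.integral_const_mul _ _
    · intro i _
      apply Continuous.intervalIntegrable; fun_prop
  rw [hswap, Finset.mul_sum]
  refine Finset.sum_congr rfl fun i _ => ?_
  rw [← key_catalan i]
  ring
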